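/- Let (ĥ, m̂) ∈ ℝ^K × ℝ^N, let Γ_h ⊆ {1,…,K} and Γ_m ⊆ {1,…,N} be the supports of ĥ and m̂, let S₁ = |Γ_h| and S₂ = |Γ_m|, and let 𝒩 = span{(−ĥ, m̂)} ⊆ ℝ^{K+N}. Let ∂‖(ĥ,m̂)‖₁ = {g ∈ ℝ^{K+N} : ‖g‖_∞ ≤ 1, g agrees with sign(ĥ) on Γ_h and with sign(m̂) on Γ_m}. Then {(δh, δm) ∈ 𝒩^⊥ : ⟨g, (δh, δm)⟩ ≤ 0 for all g ∈ ∂‖(ĥ,m̂)‖₁} ⊆ {(δh, δm) ∈ 𝒩^⊥ : ‖(δh restricted to Γ_h^c, δm restricted to Γ_m^c)‖₁ ≤ √(S₁+S₂)·‖(δh restricted to Γ_h, δm restricted to Γ_m)‖₂}. -/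
import Mathlib


open Finset
open scoped Classical

noncomputable section

def l1norm {n : ℕ} (v : Fin n → ℝ) : ℝ := ∑ i, |v i|

def restr {n : ℕ} (Γ : Finset (Fin n)) (v : Fin n → ℝ) : Fin n → ℝ :=
  fun i => if i ∈ Γ then v i else 0

lemma sign_mul_self' (x : ℝ) : Real.sign x * x = |x| := by
  rcases lt_trichotomy x 0 with h|h|h
  · rw [Real.sign_of_neg h, abs_of_neg h]; ring
  · simp [h]
  · rw [Real.sign_of_pos h, abs_of_pos h]; ring

lemma abs_sign_le_one' (x : ℝ) : |Real.sign x| ≤ 1 := by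
  rcases lt_trichotomy x 0 with h|h|h
  · rw [Real.sign_of_neg h]; norm_num
  · simp [h]
  · rw [Real.sign_of_pos h]; norm_num

lemma abs_sum_sq_le {n : ℕ} (s : Finset (Fin n)) (v : Fin n → ℝ) :
    (∑ i ∈ s, |v i|) ^ 2 ≤ (s.card : ℝ) * ∑ i ∈ s, v i ^ 2 := by
  have := sq_sum_le_card_mul_sum_sq (s := s) (f := fun i => |v i|)
  simpa [sq_abs] using this

set_option maxHeartbeats 1000000 in
theorem descent_direction_inclusion {K N : ℕ} (hh : Fin K → ℝ) (mh : Fin N → ℝ) :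
    let Γh : Finset (Fin K) := univ.filter fun i => hh i ≠ 0
    let Γm : Finset (Fin N) := univ.filter fun j => mh j ≠ 0
    let S₁ : ℕ := Γh.card
    let S₂ : ℕ := Γm.card
    -- orthogonal complement of 𝒩 = span{(-ĥ, m̂)}
    let Nperp : Set ((Fin K → ℝ) × (Fin N → ℝ)) :=
      {p | (∑ i, p.1 i * (-hh i)) + ∑ j, p.2 j * mh j = 0}
    let subgrad : Set ((Fin K → ℝ) × (Fin N → ℝ)) :=
      {g | (∀ i, |g.1 i| ≤ 1) ∧ (∀ j, |g.2 j| ≤ 1) ∧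
        (∀ i ∈ Γh, g.1 i = Real.sign (hh i)) ∧ (∀ j ∈ Γm, g.2 j = Real.sign (mh j))}
    {p | p ∈ Nperp ∧ ∀ g ∈ subgrad, (∑ i, g.1 i * p.1 i) + (∑ j, g.2 j * p.2 j) ≤ 0} ⊆
      {p | p ∈ Nperp ∧
        l1norm (restr Γhᶜ p.1) + l1norm (restr Γmᶜ p.2) ≤
          Real.sqrt ((S₁ : ℝ) + S₂) *
            Real.sqrt ((∑ i, (restr Γh p.1 i) ^ 2) + ∑ j, (restr Γm p.2 j) ^ 2)} := by
  intro Γh Γm S₁ S₂ Nperp subgrad p hp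
  obtain ⟨hperp, hle⟩ := hp
  refine ⟨hperp, ?_⟩
  -- choose the test subgradient
  set g : (Fin K → ℝ) × (Fin N → ℝ) :=
    (fun i => if i ∈ Γh then Real.sign (hh i) else Real.sign (p.1 i),
     fun j => if j ∈ Γm then Real.sign (mh j) else Real.sign (p.2 j)) with hg
  have hgmem : g ∈ subgrad := by
    refine ⟨?_, ?_, ?_, ?_⟩
    · intro i; simp only [hg]; split <;> exact abs_sign_le_one' _
    · intro j; simp only [hg]; split <;> exact abs_sign_le_one' _
    · intro i hi; simp [hg, hi]
    · intro j hj; simp [hg, hj]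
  have key := hle g hgmem
  -- split the sums
  have hsplit1 : (∑ i, g.1 i * p.1 i) =
      (∑ i ∈ Γh, Real.sign (hh i) * p.1 i) + ∑ i ∈ Γhᶜ, |p.1 i| := by
    rw [← Finset.sum_add_sum_compl Γh (fun i => g.1 i * p.1 i)]
    congr 1
    · exact Finset.sum_congr rfl fun i hi => by simp [hg, hi]
    · refine Finset.sum_congr rfl fun i hi => ?_
      have h0 : i ∉ Γh := Finset.mem_compl.mp hi
      simp [hg, h0, sign_mul_self']
  have hsplit2 : (∑ j, g.2 j * p.2 j) =
      (∑ j ∈ Γm, Real.sign (mh j) * p.2 j) + ∑ j ∈ Γmᶜ, |p.2 j| := by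
    rw [← Finset.sum_add_sum_compl Γm (fun j => g.2 j * p.2 j)]
    congr 1
    · exact Finset.sum_congr rfl fun j hj => by simp [hg, hj]
    · refine Finset.sum_congr rfl fun j hj => ?_
      have h0 : j ∉ Γm := Finset.mem_compl.mp hj
      simp [hg, h0, sign_mul_self']
  rw [hsplit1, hsplit2] at key
  -- notation
  set A1 := ∑ i ∈ Γh, |p.1 i| with hA1
  set A2 := ∑ j ∈ Γm, |p.2 j| with hA2
  set C1 := ∑ i ∈ Γhᶜ, |p.1 i| with hC1
  set C2 := ∑ j ∈ Γmᶜ, |p.2 j| with hC2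
  set B1 := ∑ i ∈ Γh, p.1 i ^ 2 with hB1
  set B2 := ∑ j ∈ Γm, p.2 j ^ 2 with hB2
  have hT1 : -A1 ≤ ∑ i ∈ Γh, Real.sign (hh i) * p.1 i := by
    rw [hA1, ← Finset.sum_neg_distrib]
    apply Finset.sum_le_sum
    intro i _
    have := neg_abs_le (Real.sign (hh i) * p.1 i)
    have h2 : |Real.sign (hh i) * p.1 i| ≤ |p.1 i| := by
      rw [abs_mul]
      calc |Real.sign (hh i)| * |p.1 i| ≤ 1 * |p.1 i| :=
        mul_le_mul_of_nonneg_right (abs_sign_le_one' _) (abs_nonneg _)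
      _ = |p.1 i| := one_mul _
    linarith
  have hT2 : -A2 ≤ ∑ j ∈ Γm, Real.sign (mh j) * p.2 j := by
    rw [hA2, ← Finset.sum_neg_distrib]
    apply Finset.sum_le_sum
    intro j _
    have := neg_abs_le (Real.sign (mh j) * p.2 j)
    have h2 : |Real.sign (mh j) * p.2 j| ≤ |p.2 j| := by
      rw [abs_mul]
      calc |Real.sign (mh j)| * |p.2 j| ≤ 1 * |p.2 j| :=
        mul_le_mul_of_nonneg_right (abs_sign_le_one' _) (abs_nonneg _)
      _ = |p.2 j| := one_mul _
    linarith
  have hCA : C1 + C2 ≤ A1 + A2 := by linarith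
  -- rewrite l1norms
  have hl1 : l1norm (restr Γhᶜ p.1) = C1 := by
    rw [l1norm, hC1,
      show (∑ i, |restr Γhᶜ p.1 i|) = ∑ i, (if i ∈ Γhᶜ then |p.1 i| else 0) from
        Finset.sum_congr rfl fun i _ => by by_cases hi : i ∈ Γhᶜ <;> simp [restr, hi],
      Finset.sum_ite_mem, Finset.univ_inter]
  have hl2 : l1norm (restr Γmᶜ p.2) = C2 := by
    rw [l1norm, hC2,
      show (∑ j, |restr Γmᶜ p.2 j|) = ∑ j, (if j ∈ Γmᶜ then |p.2 j| else 0) from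
        Finset.sum_congr rfl fun j _ => by by_cases hj : j ∈ Γmᶜ <;> simp [restr, hj],
      Finset.sum_ite_mem, Finset.univ_inter]
  have hr1 : (∑ i, (restr Γh p.1 i) ^ 2) = B1 := by
    rw [hB1,
      show (∑ i, (restr Γh p.1 i) ^ 2) = ∑ i, (if i ∈ Γh then p.1 i ^ 2 else 0) from
        Finset.sum_congr rfl fun i _ => by by_cases hi : i ∈ Γh <;> simp [restr, hi],
      Finset.sum_ite_mem, Finset.univ_inter]
  have hr2 : (∑ j, (restr Γm p.2 j) ^ 2) = B2 := by
    rw [hB2,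
      show (∑ j, (restr Γm p.2 j) ^ 2) = ∑ j, (if j ∈ Γm then p.2 j ^ 2 else 0) from
        Finset.sum_congr rfl fun j _ => by by_cases hj : j ∈ Γm <;> simp [restr, hj],
      Finset.sum_ite_mem, Finset.univ_inter]
  rw [hl1, hl2, hr1, hr2]
  -- Cauchy–Schwarz
  have hcs1 : A1 ^ 2 ≤ (S₁ : ℝ) * B1 := abs_sum_sq_le Γh p.1
  have hcs2 : A2 ^ 2 ≤ (S₂ : ℝ) * B2 := abs_sum_sq_le Γm p.2
  have hA1n : 0 ≤ A1 := Finset.sum_nonneg fun _ _ => abs_nonneg _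
  have hA2n : 0 ≤ A2 := Finset.sum_nonneg fun _ _ => abs_nonneg _
  have hB1n : 0 ≤ B1 := Finset.sum_nonneg fun _ _ => sq_nonneg _
  have hB2n : 0 ≤ B2 := Finset.sum_nonneg fun _ _ => sq_nonneg _
  have hS1n : (0:ℝ) ≤ S₁ := Nat.cast_nonneg _
  have hS2n : (0:ℝ) ≤ S₂ := Nat.cast_nonneg _
  clear_value A1 A2 C1 C2 B1 B2
  have h4 : (2 * (A1 * A2)) ^ 2 ≤ ((S₁ : ℝ) * B2 + (S₂ : ℝ) * B1) ^ 2 := by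
    nlinarith [mul_le_mul hcs1 hcs2 (sq_nonneg A2) (mul_nonneg hS1n hB1n),
      sq_nonneg ((S₁ : ℝ) * B2 - (S₂ : ℝ) * B1)]
  have h5 : 2 * (A1 * A2) ≤ (S₁ : ℝ) * B2 + (S₂ : ℝ) * B1 := by
    nlinarith [h4, mul_nonneg hA1n hA2n, mul_nonneg hS1n hB2n, mul_nonneg hS2n hB1n]
  have hkey : (A1 + A2) ^ 2 ≤ ((S₁ : ℝ) + S₂) * (B1 + B2) := by nlinarith [hcs1, hcs2, h5]
  have hfinal : A1 + A2 ≤ Real.sqrt ((S₁ : ℝ) + S₂) * Real.sqrt (B1 + B2) := by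
    rw [← Real.sqrt_mul (by linarith)]
    have := Real.sqrt_le_sqrt hkey
    rwa [Real.sqrt_sq (by linarith)] at this
  linarith
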